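/- Let 1 ≤ k ≤ n and ℓ ≥ 1 be integers and let C be an (n,k)-code over a field F. Then C is MDS(ℓ) if and only if C is GZP(ℓ). -/

import Mathlib

/-!
STATEMENT 2: A code C is MDS(ℓ) iff it is GZP(ℓ).
-/

open Finset

noncomputable section

/-- `G_A`: the span of the columns of `G` indexed by `A`. -/
def colSpan {K : Type*} [Field K] {k n : ℕ} (G : Matrix (Fin k) (Fin n) K)
    (A : Finset (Fin n)) : Submodule K (Fin k → K) :=
  Submodule.span K ((fun j i => G i j) '' (A : Set (Fin n)))

/-- The value `Σ_{p ∈ P} |∩_{j ∈ p} A_j| − (s − 1)·k` associated to a partition `P`. -/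
def partVal {ℓ n : ℕ} (k : ℕ) (A : Fin ℓ → Finset (Fin n))
    (P : Finpartition (Finset.univ : Finset (Fin ℓ))) : ℤ :=
  (∑ p ∈ P.parts, ((p.inf A).card : ℤ)) - ((P.parts.card : ℤ) - 1) * k

/-- `G` is a generator matrix of the code `C`: its rows form a basis of `C`. -/
def IsGenMatrix {F : Type*} [Field F] {k n : ℕ} (C : Submodule F (Fin n → F))
    (G : Matrix (Fin k) (Fin n) F) : Prop :=
  LinearIndependent F (fun i => G i) ∧ Submodule.span F (Set.range fun i => G i) = C

/-- `C` is `MDS(ℓ)`. -/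
def IsMDS {F : Type*} [Field F] (n k ℓ : ℕ) (C : Submodule F (Fin n → F)) : Prop :=
  ∀ G : Matrix (Fin k) (Fin n) F, IsGenMatrix C G →
    ∀ A : Fin ℓ → Finset (Fin n), (∀ i, (A i).card ≤ k) →
      IsGreatest {v : ℤ | ∃ P : Finpartition (Finset.univ : Finset (Fin ℓ)), v = partVal k A P}
        ((Module.finrank F ↥(⨅ i, colSpan G (A i))) : ℤ)

/-- `S = (S_1, …, S_k)` is a generic zero pattern: `|∩_{i ∈ I} S_i| ≤ k − |I|` for
every nonempty `I ⊆ [k]`. -/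
def IsGenericZP {k n : ℕ} (S : Fin k → Finset (Fin n)) : Prop :=
  ∀ I : Finset (Fin k), I.Nonempty → (I.inf S).card ≤ k - I.card

/-- The order of a zero pattern: the number of distinct nonempty sets among the `S_i`. -/
def patternOrder {k n : ℕ} (S : Fin k → Finset (Fin n)) : ℕ :=
  ((Finset.univ.image S).erase ∅).card

/-- `G` attains the zero pattern `S`: some invertible `M` makes `(M·G) i j = 0` for all
`i` and all `j ∈ S i`. -/
def Attains {F : Type*} [Field F] {k n : ℕ} (G : Matrix (Fin k) (Fin n) F)
    (S : Fin k → Finset (Fin n)) : Prop :=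
  ∃ M : Matrix (Fin k) (Fin k) F, IsUnit M.det ∧ ∀ i j, j ∈ S i → (M * G) i j = 0

/-- `C` is `GZP(ℓ)`: `C` is MDS (every `k` columns of a generator matrix span everything)
and every generator matrix attains every generic zero pattern of order at most `ℓ`. -/
def IsGZP {F : Type*} [Field F] (n k ℓ : ℕ) (C : Submodule F (Fin n → F)) : Prop :=
  ∀ G : Matrix (Fin k) (Fin n) F, IsGenMatrix C G →
    (∀ A : Finset (Fin n), A.card = k → colSpan G A = ⊤) ∧
    (∀ S : Fin k → Finset (Fin n), IsGenericZP S → patternOrder S ≤ ℓ → Attains G S)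

namespace MdsGzpAux

section Basic
variable {F : Type*} [Field F] {k n ℓ : ℕ} (G : Matrix (Fin k) (Fin n) F)

lemma colSpan_mono {A B : Finset (Fin n)} (h : A ⊆ B) : colSpan G A ≤ colSpan G B :=
  Submodule.span_mono (Set.image_mono (by exact_mod_cast h))

lemma colSpan_empty : colSpan G (∅ : Finset (Fin n)) = ⊥ := by
  simp [colSpan]

lemma col_mem_colSpan {A : Finset (Fin n)} {j : Fin n} (hj : j ∈ A) :
    (fun i => G i j) ∈ colSpan G A :=
  Submodule.subset_span ⟨j, by simpa using hj, rfl⟩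

lemma colSpan_union (A B : Finset (Fin n)) :
    colSpan G (A ∪ B) = colSpan G A ⊔ colSpan G B := by
  rw [colSpan, colSpan, colSpan, ← Submodule.span_union, ← Set.image_union]
  congr 1
  norm_cast

lemma finrank_colSpan_le (A : Finset (Fin n)) :
    Module.finrank F (colSpan G A) ≤ A.card := by
  classical
  have : colSpan G A = Submodule.span F (A.image (fun j i => G i j) : Set (Fin k → F)) := by
    rw [colSpan, Finset.coe_image]
  rw [this]
  exact (finrank_span_finset_le_card _).trans (Finset.card_image_le)

lemma finrank_le_k (W : Submodule F (Fin k → F)) : Module.finrank F W ≤ k := by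
  simpa using Submodule.finrank_le W

/-- If every `k` columns span, then any `≤ k` columns have full rank. -/
lemma finrank_colSpan_eq (hG : ∀ A : Finset (Fin n), A.card = k → colSpan G A = ⊤)
    (hkn : k ≤ n) {A : Finset (Fin n)} (hA : A.card ≤ k) :
    Module.finrank F (colSpan G A) = A.card := by
  obtain ⟨B, hAB, hBcard⟩ := Finset.exists_superset_card_eq hA (by simpa using hkn)
  have hBtop := hG B hBcard
  have hsplit : colSpan G A ⊔ colSpan G (B \ A) = ⊤ := by
    rw [← colSpan_union, Finset.union_sdiff_of_subset hAB, hBtop]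
  have h1 : Module.finrank F (colSpan G A ⊔ colSpan G (B \ A) : Submodule F (Fin k → F)) = k := by
    rw [hsplit, finrank_top, Module.finrank_pi]
    simp
  have h2 : Module.finrank F (colSpan G A ⊔ colSpan G (B \ A) : Submodule F (Fin k → F)) ≤
      Module.finrank F (colSpan G A) + Module.finrank F (colSpan G (B \ A)) := by
    have := Submodule.finrank_sup_add_finrank_inf_eq (colSpan G A) (colSpan G (B \ A))
    omega
  have h3 : Module.finrank F (colSpan G (B \ A)) ≤ k - A.card := by
    have := finrank_colSpan_le G (B \ A)
    have hc : (B \ A).card = k - A.card := by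
      rw [Finset.card_sdiff_of_subset hAB, hBcard]
    omega
  have h4 := finrank_colSpan_le G A
  omega

/-- dim (V ⊓ W) ≥ dim V + dim W - k. -/
lemma finrank_inf_ge (V W : Submodule F (Fin k → F)) :
    (Module.finrank F V : ℤ) + Module.finrank F W - k ≤ Module.finrank F (V ⊓ W : Submodule F (Fin k → F)) := by
  have := Submodule.finrank_sup_add_finrank_inf_eq V W
  have h2 : Module.finrank F (V ⊔ W : Submodule F (Fin k → F)) ≤ k := finrank_le_k _
  omega


/-- Iterated: finrank (⨅_{p∈s} V p) ≥ Σ finrank V p - (card s - 1) k, s nonempty. -/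
lemma finrank_finset_inf_ge {α : Type*} [DecidableEq α] (s : Finset α) (hs : s.Nonempty)
    (V : α → Submodule F (Fin k → F)) :
    (∑ p ∈ s, (Module.finrank F (V p) : ℤ)) - ((s.card : ℤ) - 1) * k ≤
      Module.finrank F (s.inf V : Submodule F (Fin k → F)) := by
  induction hs using Finset.Nonempty.cons_induction with
  | singleton a =>
      have : ({a} : Finset α).inf V = V a := Finset.inf_singleton
      rw [this]; simp
  | cons a s ha hs ih =>
      rw [Finset.inf_cons]
      have h1 : (Module.finrank F (V a) : ℤ) + Module.finrank F (s.inf V : Submodule F (Fin k → F)) - k ≤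
          Module.finrank F (V a ⊓ s.inf V : Submodule F (Fin k → F)) := by
        have := Submodule.finrank_sup_add_finrank_inf_eq (V a) (s.inf V)
        have h2 : Module.finrank F ((V a) ⊔ (s.inf V) : Submodule F (Fin k → F)) ≤ k := by
          simpa using Submodule.finrank_le ((V a) ⊔ (s.inf V) : Submodule F (Fin k → F))
        omega
      rw [Finset.sum_cons, Finset.card_cons]
      push_cast
      have := hs.card_pos
      nlinarith [ih]


/-- R2: lower bound on the intersection dimension, for every partition. -/
lemma partVal_le_finrank (hG : ∀ A : Finset (Fin n), A.card = k → colSpan G A = ⊤)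
    (hkn : k ≤ n) (hl : 1 ≤ ℓ) (A : Fin ℓ → Finset (Fin n)) (hA : ∀ i, (A i).card ≤ k)
    (P : Finpartition (Finset.univ : Finset (Fin ℓ))) :
    partVal k A P ≤ (Module.finrank F ↥(⨅ i, colSpan G (A i)) : ℤ) := by
  classical
  have hparts : ∀ p ∈ P.parts, (p.inf A).card ≤ k := by
    intro p hp
    obtain ⟨j, hj⟩ := P.nonempty_of_mem_parts hp
    exact le_trans (Finset.card_le_card (Finset.inf_le hj)) (hA j)
  have hPne : P.parts.Nonempty := P.parts_nonempty (by
    simp only [bot_eq_empty, ← Finset.nonempty_iff_ne_empty, Finset.univ_nonempty_iff]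
    exact Fin.pos_iff_nonempty.mp hl)
  have hle : P.parts.inf (fun p => colSpan G (p.inf A)) ≤ ⨅ i, colSpan G (A i) := by
    refine le_iInf fun i => ?_
    obtain ⟨p, hp, hip⟩ := P.exists_mem (Finset.mem_univ i)
    exact le_trans (Finset.inf_le hp) (colSpan_mono G (Finset.inf_le hip))
  have hrank : Module.finrank F (P.parts.inf (fun p => colSpan G (p.inf A)) : Submodule F (Fin k → F)) ≤
      Module.finrank F ↥(⨅ i, colSpan G (A i)) := Submodule.finrank_mono hle
  have hmain := finrank_finset_inf_ge (F := F) (k := k) P.parts hPne (fun p => colSpan G (p.inf A))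
  have hsum : (∑ p ∈ P.parts, ((p.inf A).card : ℤ)) =
      ∑ p ∈ P.parts, (Module.finrank F (colSpan G (p.inf A)) : ℤ) := by
    refine Finset.sum_congr rfl fun p hp => ?_
    rw [finrank_colSpan_eq G hG hkn (hparts p hp)]
  rw [partVal, hsum]
  calc (∑ p ∈ P.parts, (Module.finrank F (colSpan G (p.inf A)) : ℤ)) - ((P.parts.card : ℤ) - 1) * k
      ≤ (Module.finrank F (P.parts.inf (fun p => colSpan G (p.inf A)) : Submodule F (Fin k → F)) : ℤ) := hmain
    _ ≤ _ := by exact_mod_cast hrank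


lemma isMDS_spanning (hl : 1 ≤ ℓ) {C : Submodule F (Fin n → F)} (hGen : IsGenMatrix C G)
    (h : IsMDS n k ℓ C) : ∀ A : Finset (Fin n), A.card = k → colSpan G A = ⊤ := by
  intro A hA
  have hne : Nonempty (Fin ℓ) := Fin.pos_iff_nonempty.mp hl
  have hg := h G hGen (fun _ => A) (fun _ => le_of_eq hA)
  set P : Finpartition (Finset.univ : Finset (Fin ℓ)) :=
    Finpartition.indiscrete (by
      simp only [bot_eq_empty, ← Finset.nonempty_iff_ne_empty, Finset.univ_nonempty_iff]
      exact hne) with hP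
  have hval : partVal k (fun _ => A) P = (A.card : ℤ) := by
    rw [partVal, hP]
    simp [Finpartition.indiscrete, Finset.inf_const (Finset.univ_nonempty (α := Fin ℓ))]
  have hub := hg.2 ⟨P, rfl⟩
  rw [hval, hA] at hub
  have hiInf : (⨅ _i : Fin ℓ, colSpan G A) = colSpan G A := iInf_const
  rw [hiInf] at hub
  have hk' : (k : ℤ) ≤ Module.finrank F (colSpan G A) := hub
  have hfin : Module.finrank F (colSpan G A) = Module.finrank F (Fin k → F) := by
    have h1 : Module.finrank F (Fin k → F) = k := by simp [Module.finrank_pi]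
    have h2 : Module.finrank F (colSpan G A) ≤ k := by
      simpa [h1] using Submodule.finrank_le (colSpan G A)
    omega
  exact Submodule.eq_top_of_finrank_eq hfin

end Basic

section Rado
open Module
variable {K V : Type*} [Field K] [AddCommGroup V] [Module K V] [FiniteDimensional K V]
variable {ι : Type*} [Fintype ι] [DecidableEq ι]

lemma rado_base (W : ι → Submodule K V) (hdim : ∀ i, finrank K (W i) ≤ 1)
    (hall : ∀ I : Finset ι, I.card ≤ finrank K (I.sup W : Submodule K V)) :
    ∃ φ : ι → V, (∀ i, φ i ∈ W i) ∧ LinearIndependent K φ := by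
  have hone : ∀ i, finrank K (W i) = 1 := by
    intro i
    have h1 := hall {i}
    rw [Finset.sup_singleton, Finset.card_singleton] at h1
    exact le_antisymm (hdim i) h1
  have hex : ∀ i, ∃ x ∈ W i, x ≠ (0 : V) := by
    intro i
    rw [← Submodule.ne_bot_iff]
    intro hbot
    have := hone i
    rw [hbot] at this
    simpa using this
  choose φ hmem hne using hex
  refine ⟨φ, hmem, ?_⟩
  have hspan : ∀ i, Submodule.span K {φ i} = W i := by
    intro i
    refine Submodule.eq_of_le_of_finrank_le ((Submodule.span_singleton_le_iff_mem _ _).2 (hmem i)) ?_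
    rw [hone i, finrank_span_singleton (hne i)]
  have hrange : Submodule.span K (Set.range φ) = Finset.univ.sup W := by
    rw [Submodule.span_range_eq_iSup, Finset.sup_univ_eq_iSup]
    exact iSup_congr hspan
  rw [linearIndependent_iff_card_eq_finrank_span]
  have h1 : Fintype.card ι ≤ (Set.range φ).finrank K := by
    have := hall Finset.univ
    rwa [Finset.card_univ, ← hrange] at this
  have h2 : (Set.range φ).finrank K ≤ Fintype.card ι := finrank_range_le_card φ
  omega

lemma rado_aux (N : ℕ) : ∀ (W : ι → Submodule K V),
    (∑ i, finrank K (W i)) ≤ N →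
    (∀ I : Finset ι, I.card ≤ finrank K (I.sup W : Submodule K V)) →
    ∃ φ : ι → V, (∀ i, φ i ∈ W i) ∧ LinearIndependent K φ := by
  induction N with
  | zero =>
      intro W hsum hall
      refine rado_base W (fun i => ?_) hall
      have : finrank K (W i) ≤ ∑ j, finrank K (W j) :=
        Finset.single_le_sum (f := fun j => finrank K (W j)) (fun j _ => Nat.zero_le _)
          (Finset.mem_univ i)
      omega
  | succ N ih =>
      intro W hsum hall
      classical
      by_cases hdim : ∃ i0, 2 ≤ finrank K (W i0)
      · obtain ⟨i0, hi0⟩ := hdim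
        set d := finrank K (W i0) with hd
        have hd2 : 2 ≤ d := hi0
        obtain ⟨b⟩ : Nonempty (Basis (Fin d) K (W i0)) := ⟨finBasis K (W i0)⟩
        set v : Fin d → V := fun j => (b j : V) with hv
        have hvmem : ∀ j, v j ∈ W i0 := fun j => (b j).2
        set j0 : Fin d := ⟨0, by omega⟩
        set j1 : Fin d := ⟨1, by omega⟩
        have hj01 : j0 ≠ j1 := by simp [j0, j1, Fin.ext_iff]
        set s1 : Finset (Fin d) := Finset.univ.erase j0 with hs1
        set s2 : Finset (Fin d) := Finset.univ.erase j1 with hs2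
        set U1 : Submodule K V := Submodule.span K ((s1.image v : Finset V) : Set V) with hU1
        set U2 : Submodule K V := Submodule.span K ((s2.image v : Finset V) : Set V) with hU2
        have hUle : ∀ (s : Finset (Fin d)),
            Submodule.span K ((s.image v : Finset V) : Set V) ≤ W i0 := by
          intro s
          rw [Submodule.span_le]
          intro x hx
          obtain ⟨j, -, rfl⟩ := by simpa using hx
          exact hvmem j
        have hU1le : U1 ≤ W i0 := hUle s1
        have hU2le : U2 ≤ W i0 := hUle s2
        have hUrank : ∀ (j : Fin d),
            finrank K (Submodule.span K (((Finset.univ.erase j).image v : Finset V) : Set V)) < d := by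
          intro j
          have h1 := finrank_span_finset_le_card (R := K) ((Finset.univ.erase j).image v)
          have h2 := Finset.card_image_le (s := Finset.univ.erase j) (f := v)
          have h3 : (Finset.univ.erase j).card = d - 1 := by
            rw [Finset.card_erase_of_mem (Finset.mem_univ j), Finset.card_univ, Fintype.card_fin]
          unfold Set.finrank at h1
          omega
        have hU1lt : finrank K U1 < d := hUrank j0
        have hU2lt : finrank K U2 < d := hUrank j1
        have hsup12 : U1 ⊔ U2 = W i0 := by
          refine le_antisymm (sup_le hU1le hU2le) ?_
          have hWspan : Submodule.span K ((Finset.univ.image v : Finset V) : Set V) = W i0 := by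
            rw [Finset.coe_image, Finset.coe_univ, Set.image_univ]
            have hrv : Set.range v = (W i0).subtype '' Set.range b := by
              rw [← Set.range_comp]; rfl
            rw [hrv, ← Submodule.map_span, b.span_eq, Submodule.map_top, Submodule.range_subtype]
          rw [← hWspan, Submodule.span_le]
          intro x hx
          obtain ⟨j, -, rfl⟩ := by simpa using hx
          by_cases hj0 : j = j0
          · refine Submodule.mem_sup_right (Submodule.subset_span ?_)
            simp only [Finset.coe_image, Set.mem_image, Finset.mem_coe]
            exact ⟨j, by simp [hs2, hj0, hj01], rfl⟩
          · refine Submodule.mem_sup_left (Submodule.subset_span ?_)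
            simp only [Finset.coe_image, Set.mem_image, Finset.mem_coe]
            exact ⟨j, by simp [hs1, hj0], rfl⟩
        -- key: if the Hall condition holds for an update, we are done
        have hkey : ∀ (U : Submodule K V), U ≤ W i0 → finrank K U < d →
            (∀ I : Finset ι, I.card ≤ finrank K (I.sup (Function.update W i0 U) : Submodule K V)) →
            ∃ φ : ι → V, (∀ i, φ i ∈ W i) ∧ LinearIndependent K φ := by
          intro U hUle' hUlt hallU
          have hupdate : (fun i => finrank K ((Function.update W i0 U) i)) =
              Function.update (fun i => finrank K (W i)) i0 (finrank K U) := by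
            funext i
            by_cases h : i = i0
            · subst h; rw [Function.update_self, Function.update_self]
            · rw [Function.update_of_ne h, Function.update_of_ne h]
          have hsum2 : ∑ i, finrank K ((Function.update W i0 U) i) ≤ N := by
            rw [hupdate, Finset.sum_update_of_mem (Finset.mem_univ i0)]
            have hrest := Finset.sum_eq_sum_sdiff_singleton_add (Finset.mem_univ i0)
              (fun i => finrank K (W i))
            omega
          obtain ⟨φ, hφ, hind⟩ := ih (Function.update W i0 U) hsum2 hallU
          refine ⟨φ, fun i => ?_, hind⟩
          by_cases h : i = i0
          · subst h
            have := hφ i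
            rw [Function.update_self] at this
            exact hUle' this
          · have := hφ i
            rwa [Function.update_of_ne h] at this
        by_cases hall1 : ∀ I : Finset ι, I.card ≤ finrank K (I.sup (Function.update W i0 U1) : Submodule K V)
        · exact hkey U1 hU1le hU1lt hall1
        by_cases hall2 : ∀ I : Finset ι, I.card ≤ finrank K (I.sup (Function.update W i0 U2) : Submodule K V)
        · exact hkey U2 hU2le hU2lt hall2
        -- contradiction
        exfalso
        push_neg at hall1 hall2
        obtain ⟨I, hI⟩ := hall1
        obtain ⟨J, hJ⟩ := hall2
        have hmemI : ∀ (L : Finset ι) (U : Submodule K V),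
            finrank K (L.sup (Function.update W i0 U) : Submodule K V) < L.card → i0 ∈ L := by
          intro L U hL
          by_contra h
          have heq : L.sup (Function.update W i0 U) = L.sup W :=
            Finset.sup_congr rfl fun j hj => Function.update_of_ne (fun hji => h (by rw [← hji]; exact hj)) _ _
          rw [heq] at hL
          exact absurd (hall L) (not_le.2 hL)
        have hi0I : i0 ∈ I := hmemI I U1 hI
        have hi0J : i0 ∈ J := hmemI J U2 hJ
        set I' := I.erase i0 with hI'
        set J' := J.erase i0 with hJ'
        have hsupeq : ∀ (L : Finset ι) (U : Submodule K V) (hL : i0 ∈ L),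
            L.sup (Function.update W i0 U) = U ⊔ (L.erase i0).sup W := by
          intro L U hL
          conv_lhs => rw [← Finset.insert_erase hL]
          rw [Finset.sup_insert, Function.update_self]
          congr 1
          exact Finset.sup_congr rfl fun j hj =>
            Function.update_of_ne (Finset.ne_of_mem_erase hj) _ _
        have h1 : finrank K (U1 ⊔ I'.sup W : Submodule K V) < I.card := by
          rw [← hsupeq I U1 hi0I]; exact hI
        have h2 : finrank K (U2 ⊔ J'.sup W : Submodule K V) < J.card := by
          rw [← hsupeq J U2 hi0J]; exact hJ
        set X : Submodule K V := U1 ⊔ I'.sup W with hX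
        set Y : Submodule K V := U2 ⊔ J'.sup W with hY
        have hsub := Submodule.finrank_sup_add_finrank_inf_eq X Y
        have hXY : X ⊔ Y = (insert i0 (I' ∪ J')).sup W := by
          rw [Finset.sup_insert, Finset.sup_union, hX, hY, sup_sup_sup_comm, hsup12]
        have hinf : (I' ∩ J').sup W ≤ X ⊓ Y := by
          refine le_inf ?_ ?_
          · exact le_trans (Finset.sup_mono Finset.inter_subset_left) le_sup_right
          · exact le_trans (Finset.sup_mono Finset.inter_subset_right) le_sup_right
        have hBrank : finrank K ((I' ∩ J').sup W : Submodule K V) ≤ finrank K (X ⊓ Y : Submodule K V) :=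
          Submodule.finrank_mono hinf
        have hA := hall (insert i0 (I' ∪ J'))
        rw [← hXY] at hA
        have hB := hall (I' ∩ J')
        have hcard : (insert i0 (I' ∪ J')).card = (I' ∪ J').card + 1 := by
          rw [Finset.card_insert_of_notMem]
          simp [hI', hJ']
        have hcardu := Finset.card_union_add_card_inter I' J'
        have hcI : I'.card = I.card - 1 := by rw [hI', Finset.card_erase_of_mem hi0I]
        have hcJ : J'.card = J.card - 1 := by rw [hJ', Finset.card_erase_of_mem hi0J]
        have hIpos : 0 < I.card := Finset.card_pos.2 ⟨i0, hi0I⟩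
        have hJpos : 0 < J.card := Finset.card_pos.2 ⟨i0, hi0J⟩
        omega
      · push_neg at hdim
        exact rado_base W (fun i => by have := hdim i; omega) hall

/-- Rado's theorem for subspaces. -/
lemma rado (W : ι → Submodule K V)
    (hall : ∀ I : Finset ι, I.card ≤ finrank K (I.sup W : Submodule K V)) :
    ∃ φ : ι → V, (∀ i, φ i ∈ W i) ∧ LinearIndependent K φ :=
  rado_aux (∑ i, finrank K (W i)) W le_rfl hall

end Rado

section DW
variable {ι : Type*} [Fintype ι] [DecidableEq ι]

/-- Dilworth-truncation style allocation lemma. -/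
lemma dw [Nonempty ι] (f : Finset ι → ℤ)
    (hmono : ∀ {T T' : Finset ι}, T.Nonempty → T ⊆ T' → f T ≤ f T')
    (hpos : ∀ i : ι, 0 ≤ f {i})
    (hsubmod : ∀ {T T' : Finset ι}, (T ∩ T').Nonempty →
      f (T ∪ T') + f (T ∩ T') ≤ f T + f T') :
    ∃ m : ι → ℤ, (∀ i, 0 ≤ m i) ∧ (∀ T : Finset ι, T.Nonempty → ∑ i ∈ T, m i ≤ f T) ∧
      ∃ P : Finpartition (Finset.univ : Finset ι), ∑ i, m i = ∑ p ∈ P.parts, f p := by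
  classical
  have hfnn : ∀ T : Finset ι, T.Nonempty → 0 ≤ f T := by
    intro T hT
    obtain ⟨i, hi⟩ := hT
    exact le_trans (hpos i) (hmono (Finset.singleton_nonempty i) (by simpa using hi))
  set Feas : (ι → ℤ) → Prop :=
    fun m => (∀ i, 0 ≤ m i) ∧ ∀ T : Finset ι, T.Nonempty → ∑ i ∈ T, m i ≤ f T with hFeas
  have hFeas0 : Feas 0 := ⟨fun i => le_rfl, fun T hT => by simpa using hfnn T hT⟩
  -- maximize the total
  set P : ℤ → Prop := fun s => ∃ m, Feas m ∧ s = ∑ i, m i with hP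
  have hPbdd : ∃ b : ℤ, ∀ z, P z → z ≤ b := by
    refine ⟨f Finset.univ, ?_⟩
    rintro z ⟨m, hm, rfl⟩
    exact hm.2 Finset.univ Finset.univ_nonempty
  have hPex : ∃ z, P z := ⟨∑ i, (0 : ι → ℤ) i, 0, hFeas0, rfl⟩
  obtain ⟨s, ⟨m, hm, rfl⟩, hmax⟩ := Int.exists_greatest_of_bdd hPbdd hPex
  set Tight : Finset ι → Prop := fun T => T.Nonempty ∧ ∑ i ∈ T, m i = f T with hTight
  -- every index is in a tight set
  have htight_ex : ∀ i : ι, ∃ T : Finset ι, i ∈ T ∧ Tight T := by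
    intro i
    by_contra hno
    push_neg at hno
    have hstrict : ∀ T : Finset ι, T.Nonempty → i ∈ T → ∑ j ∈ T, m j < f T := by
      intro T hT hiT
      rcases lt_or_eq_of_le (hm.2 T hT) with h | h
      · exact h
      · exact absurd ⟨hT, h⟩ (hno T hiT)
    set m' := Function.update m i (m i + 1) with hm'
    have hsum' : ∀ T : Finset ι, i ∈ T → ∑ j ∈ T, m' j = (∑ j ∈ T, m j) + 1 := by
      intro T hiT
      rw [hm', Finset.sum_update_of_mem hiT]
      rw [Finset.sum_eq_sum_sdiff_singleton_add hiT m]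
      ring
    have hsum'' : ∀ T : Finset ι, i ∉ T → ∑ j ∈ T, m' j = ∑ j ∈ T, m j := by
      intro T hiT
      exact Finset.sum_congr rfl fun j hj => Function.update_of_ne (fun h => hiT (by rw [← h]; exact hj)) _ _
    have hFeas' : Feas m' := by
      constructor
      · intro j
        by_cases h : j = i
        · subst h; rw [hm', Function.update_self]; linarith [hm.1 j]
        · rw [hm', Function.update_of_ne h]; exact hm.1 j
      · intro T hT
        by_cases h : i ∈ T
        · rw [hsum' T h]
          have := hstrict T hT h
          omega
        · rw [hsum'' T h]
          exact hm.2 T hT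
    have : ∑ j, m' j = (∑ j, m j) + 1 := hsum' Finset.univ (Finset.mem_univ i)
    have hle := hmax _ ⟨m', hFeas', rfl⟩
    omega
  -- tight sets are closed under intersecting unions
  have htight_union : ∀ {T T' : Finset ι}, Tight T → Tight T' → (T ∩ T').Nonempty →
      Tight (T ∪ T') := by
    intro T T' hT hT' hint
    have h1 : f (T ∪ T') + f (T ∩ T') ≤ f T + f T' := hsubmod hint
    have h2 : (∑ j ∈ T ∪ T', m j) + ∑ j ∈ T ∩ T', m j = (∑ j ∈ T, m j) + ∑ j ∈ T', m j :=
      Finset.sum_union_inter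
    have h3 := hm.2 (T ∪ T') (hT.1.mono Finset.subset_union_left)
    have h4 := hm.2 (T ∩ T') hint
    refine ⟨hT.1.mono Finset.subset_union_left, ?_⟩
    rw [hT.2, hT'.2] at h2
    omega
  -- maximal tight set containing i
  set 𝒯 : ι → Finset (Finset ι) :=
    fun i => Finset.univ.filter (fun T => i ∈ T ∧ Tight T) with h𝒯
  have h𝒯ne : ∀ i, (𝒯 i).Nonempty := by
    intro i
    obtain ⟨T, hiT, hT⟩ := htight_ex i
    exact ⟨T, Finset.mem_filter.2 ⟨Finset.mem_univ T, hiT, hT⟩⟩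
  set U : ι → Finset ι := fun i => (𝒯 i).sup id with hU
  have hUspec : ∀ i, i ∈ U i ∧ Tight (U i) := by
    intro i
    have key : ∀ S : Finset (Finset ι), S.Nonempty → (∀ T ∈ S, i ∈ T ∧ Tight T) →
        i ∈ S.sup id ∧ Tight (S.sup id) := by
      intro S hS
      induction hS using Finset.Nonempty.cons_induction with
      | singleton T =>
          intro h
          have := h T (Finset.mem_singleton_self T)
          simpa using this
      | cons T S hTS hS ih =>
          intro h
          have hT := h T (Finset.mem_cons_self T S)
          have hrest := ih fun T' hT' => h T' (Finset.mem_cons.2 (Or.inr hT'))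
          rw [Finset.sup_cons]
          constructor
          · exact Finset.mem_union_left _ hT.1
          · refine htight_union hT.2 hrest.2 ⟨i, ?_⟩
            simp only [Finset.mem_inter]
            exact ⟨hT.1, hrest.1⟩
    refine key (𝒯 i) (h𝒯ne i) fun T hT => ?_
    simp only [h𝒯, Finset.mem_filter] at hT
    exact hT.2
  have hUmax : ∀ i (T : Finset ι), i ∈ T → Tight T → T ⊆ U i := by
    intro i T hiT hT
    exact Finset.le_sup (f := id) (Finset.mem_filter.2 ⟨Finset.mem_univ T, hiT, hT⟩)
  have hUeq : ∀ i j, ¬ Disjoint (U i) (U j) → U i = U j := by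
    intro i j hd
    rw [Finset.not_disjoint_iff_nonempty_inter] at hd
    have huni : Tight (U i ∪ U j) := htight_union (hUspec i).2 (hUspec j).2 hd
    have h1 : U i ∪ U j ⊆ U i :=
      hUmax i _ (Finset.mem_union_left _ (hUspec i).1) huni
    have h2 : U i ∪ U j ⊆ U j :=
      hUmax j _ (Finset.mem_union_right _ (hUspec j).1) huni
    exact Finset.Subset.antisymm
      (le_trans Finset.subset_union_left h2) (le_trans Finset.subset_union_right h1)
  -- build the partition
  set parts : Finset (Finset ι) := Finset.univ.image U with hparts
  have hsup : parts.sup id = Finset.univ := by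
    refine Finset.Subset.antisymm (Finset.subset_univ _) ?_
    intro j _
    have : U j ∈ parts := Finset.mem_image_of_mem U (Finset.mem_univ j)
    exact Finset.mem_sup.2 ⟨U j, this, (hUspec j).1⟩
  have hdisj : (parts : Set (Finset ι)).PairwiseDisjoint id := by
    intro p hp q hq hpq
    simp only [hparts, Finset.coe_image, Set.mem_image] at hp hq
    obtain ⟨i, -, rfl⟩ := hp
    obtain ⟨j, -, rfl⟩ := hq
    by_contra hd
    exact hpq (hUeq i j hd)
  have hnotbot : ⊥ ∉ parts := by
    simp only [hparts, Finset.mem_image, bot_eq_empty]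
    rintro ⟨i, -, hUi⟩
    have := (hUspec i).1
    rw [hUi] at this
    exact absurd this (Finset.notMem_empty i)
  set Part : Finpartition (Finset.univ : Finset ι) :=
    ⟨parts, Finset.supIndep_iff_pairwiseDisjoint.2 hdisj, hsup, hnotbot⟩ with hPart
  refine ⟨m, hm.1, hm.2, Part, ?_⟩
  have htightp : ∀ p ∈ parts, f p = ∑ i ∈ p, m i := by
    intro p hp
    simp only [hparts, Finset.mem_image] at hp
    obtain ⟨i, -, rfl⟩ := hp
    exact ((hUspec i).2).2.symm
  calc ∑ i, m i = ∑ i ∈ parts.sup id, m i := by rw [hsup]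
    _ = ∑ i ∈ parts.biUnion id, m i := by rw [Finset.sup_eq_biUnion]
    _ = ∑ p ∈ parts, ∑ i ∈ p, m i := Finset.sum_biUnion hdisj
    _ = ∑ p ∈ parts, f p := by
        refine Finset.sum_congr rfl fun p hp => (htightp p hp).symm
end DW

section Glue
open Module
variable {F : Type*} [Field F] {k n ℓ : ℕ} (G : Matrix (Fin k) (Fin n) F)

lemma finrank_ann {K V : Type*} [Field K] [AddCommGroup V] [Module K V]
    [FiniteDimensional K V] (X : Subspace K V) :
    finrank K X + finrank K X.dualAnnihilator = finrank K V := by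
  have h1 : finrank K (V ⧸ X) = finrank K X.dualAnnihilator :=
    LinearEquiv.finrank_eq X.quotEquivAnnihilator
  have h2 := Submodule.finrank_quotient_add_finrank X
  omega

lemma sup_dualAnnihilator {K V : Type*} [Field K] [AddCommGroup V] [Module K V]
    {α : Type*} [DecidableEq α] (I : Finset α) (Wf : α → Subspace K V) :
    I.sup (fun i => (Wf i).dualAnnihilator) = (I.inf Wf).dualAnnihilator := by
  induction I using Finset.induction with
  | empty => simp
  | insert _ _ _ ih =>
      rw [Finset.sup_insert, Finset.inf_insert, Subspace.dualAnnihilator_inf_eq, ih]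

/-- The key dimension bound from `IsMDS` for generic zero patterns. -/
lemma isMDS_inf_bound (hl : 1 ≤ ℓ) {C : Submodule F (Fin n → F)} (hGen : IsGenMatrix C G)
    (h : IsMDS n k ℓ C) (S : Fin k → Finset (Fin n)) (hS : IsGenericZP S)
    (hord : patternOrder S ≤ ℓ) (I : Finset (Fin k)) (hI : I.Nonempty) :
    finrank F (I.inf (fun i => colSpan G (S i)) : Submodule F (Fin k → F)) + I.card ≤ k := by
  classical
  have hIk : I.card ≤ k := by
    have := Finset.card_le_card (Finset.subset_univ I)
    simpa using this
  by_cases hemp : ∃ i ∈ I, S i = ∅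
  · obtain ⟨i, hiI, hSi⟩ := hemp
    have hle : I.inf (fun i => colSpan G (S i)) ≤ ⊥ := by
      refine le_trans (Finset.inf_le hiI) ?_
      rw [hSi, colSpan_empty]
    have : finrank F (I.inf (fun i => colSpan G (S i)) : Submodule F (Fin k → F)) = 0 := by
      rw [le_bot_iff.1 hle, finrank_bot]
    omega
  · push_neg at hemp
    set Vals : Finset (Finset (Fin n)) := I.image S with hVals
    have hValsne : Vals.Nonempty := hI.image S
    have hValspos : 0 < Vals.card := Finset.card_pos.2 hValsne
    have hValscard : Vals.card ≤ ℓ := by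
      refine le_trans (Finset.card_le_card ?_) hord
      intro v hv
      obtain ⟨i, hiI, rfl⟩ := Finset.mem_image.1 hv
      exact Finset.mem_erase.2 ⟨by
        simpa [← Finset.nonempty_iff_ne_empty] using hemp i hiI,
        Finset.mem_image_of_mem S (Finset.mem_univ i)⟩
    -- enumerate the values
    set e := Vals.equivFin with he
    set A : Fin ℓ → Finset (Fin n) := fun t =>
      if ht : (t : ℕ) < Vals.card then (e.symm ⟨t, ht⟩ : Finset (Fin n))
      else (e.symm ⟨0, hValspos⟩ : Finset (Fin n)) with hA
    have hAmem : ∀ t, A t ∈ Vals := by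
      intro t
      by_cases ht : (t : ℕ) < Vals.card
      · rw [hA]; dsimp only; rw [dif_pos ht]; exact Finset.coe_mem _
      · rw [hA]; dsimp only; rw [dif_neg ht]; exact Finset.coe_mem _
    have hAsurj : ∀ v ∈ Vals, ∃ t : Fin ℓ, A t = v := by
      intro v hv
      have hlt : ((e ⟨v, hv⟩ : Fin Vals.card) : ℕ) < Vals.card := (e ⟨v, hv⟩).2
      refine ⟨⟨(e ⟨v, hv⟩ : Fin Vals.card), lt_of_lt_of_le hlt hValscard⟩, ?_⟩
      rw [hA]
      dsimp only
      rw [dif_pos hlt]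
      have hfin : (⟨((e ⟨v, hv⟩ : Fin Vals.card) : ℕ), hlt⟩ : Fin Vals.card) = e ⟨v, hv⟩ :=
        Fin.ext rfl
      rw [hfin, Equiv.symm_apply_apply]
    have hAcard : ∀ t, (A t).card ≤ k := by
      intro t
      obtain ⟨i, hiI, hSi⟩ := Finset.mem_image.1 (hAmem t)
      have := hS {i} (Finset.singleton_nonempty i)
      rw [Finset.inf_singleton, Finset.card_singleton] at this
      rw [← hSi]
      omega
    have hinf : (⨅ t, colSpan G (A t)) = (I.inf (fun i => colSpan G (S i))) := by
      refine le_antisymm ?_ ?_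
      · refine Finset.le_inf fun i hiI => ?_
        have hSiv : S i ∈ Vals := Finset.mem_image_of_mem S hiI
        obtain ⟨t, ht⟩ := hAsurj (S i) hSiv
        exact le_trans (iInf_le _ t) (le_of_eq (by rw [ht]))
      · refine le_iInf fun t => ?_
        obtain ⟨i, hiI, hSi⟩ := Finset.mem_image.1 (hAmem t)
        exact le_trans (Finset.inf_le hiI) (le_of_eq (by rw [hSi]))
    obtain ⟨P, hP⟩ := (h G hGen A hAcard).1
    rw [hinf] at hP
    -- bound partVal k A P ≤ k - I.card
    set J : Finset (Fin ℓ) → Finset (Fin k) :=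
      fun p => I.filter (fun i => S i ∈ p.image A) with hJ
    have hJinf : ∀ p ∈ P.parts, (J p).inf S = p.inf A := by
      intro p hp
      have himg : (J p).image S = p.image A := by
        refine Finset.Subset.antisymm ?_ ?_
        · intro v hv
          obtain ⟨i, hiJ, rfl⟩ := Finset.mem_image.1 hv
          exact (Finset.mem_filter.1 hiJ).2
        · intro v hv
          obtain ⟨t, htp, rfl⟩ := Finset.mem_image.1 hv
          obtain ⟨i, hiI, hSi⟩ := Finset.mem_image.1 (hAmem t)
          refine Finset.mem_image.2 ⟨i, Finset.mem_filter.2 ⟨hiI, ?_⟩, hSi⟩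
          rw [hSi]
          exact Finset.mem_image_of_mem A htp
      have h1 : (J p).inf S = ((J p).image S).inf id := by
        rw [Finset.inf_image]; rfl
      have h2 : p.inf A = (p.image A).inf id := by
        rw [Finset.inf_image]; rfl
      rw [h1, h2, himg]
    have hJne : ∀ p ∈ P.parts, (J p).Nonempty := by
      intro p hp
      obtain ⟨t, htp⟩ := P.nonempty_of_mem_parts hp
      obtain ⟨i, hiI, hSi⟩ := Finset.mem_image.1 (hAmem t)
      exact ⟨i, Finset.mem_filter.2 ⟨hiI, by rw [hSi]; exact Finset.mem_image_of_mem A htp⟩⟩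
    have hJbound : ∀ p ∈ P.parts, ((p.inf A).card : ℤ) + (J p).card ≤ k := by
      intro p hp
      have := hS (J p) (hJne p hp)
      rw [hJinf p hp] at this
      have hJk : (J p).card ≤ k := by
        have h1 : J p ⊆ I := Finset.filter_subset _ _
        exact le_trans (Finset.card_le_card h1) hIk
      push_cast
      omega
    have hcover : I ⊆ P.parts.biUnion J := by
      intro i hiI
      have hSiv : S i ∈ Vals := Finset.mem_image_of_mem S hiI
      obtain ⟨t, ht⟩ := hAsurj (S i) hSiv
      obtain ⟨p, hp, htp⟩ := P.exists_mem (Finset.mem_univ t)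
      exact Finset.mem_biUnion.2 ⟨p, hp, Finset.mem_filter.2 ⟨hiI, by
        rw [← ht]; exact Finset.mem_image_of_mem A htp⟩⟩
    have hcardsum : (I.card : ℤ) ≤ ∑ p ∈ P.parts, ((J p).card : ℤ) := by
      have h1 : I.card ≤ (P.parts.biUnion J).card := Finset.card_le_card hcover
      have h2 : (P.parts.biUnion J).card ≤ ∑ p ∈ P.parts, (J p).card :=
        Finset.card_biUnion_le
      push_cast
      exact_mod_cast le_trans h1 h2
    -- now conclude
    have hPne : P.parts.Nonempty := P.parts_nonempty (by
      simp only [bot_eq_empty, ← Finset.nonempty_iff_ne_empty, Finset.univ_nonempty_iff]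
      exact Fin.pos_iff_nonempty.mp hl)
    have hsum : (∑ p ∈ P.parts, ((p.inf A).card : ℤ)) + ∑ p ∈ P.parts, ((J p).card : ℤ) ≤
        (P.parts.card : ℤ) * k := by
      rw [← Finset.sum_add_distrib]
      calc ∑ p ∈ P.parts, (((p.inf A).card : ℤ) + ((J p).card : ℤ))
          ≤ ∑ _p ∈ P.parts, (k : ℤ) := Finset.sum_le_sum hJbound
        _ = (P.parts.card : ℤ) * k := by rw [Finset.sum_const, nsmul_eq_mul]
    have hval : partVal k A P + I.card ≤ k := by
      rw [partVal]
      have := hPne.card_pos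
      nlinarith [hcardsum, hsum]
    have hfinal : (finrank F (I.inf (fun i => colSpan G (S i)) : Submodule F (Fin k → F)) : ℤ)
        + I.card ≤ k := by
      rw [hP]
      exact hval
    exact_mod_cast hfinal


lemma isMDS_attains (hl : 1 ≤ ℓ) {C : Submodule F (Fin n → F)} (hGen : IsGenMatrix C G)
    (h : IsMDS n k ℓ C) (S : Fin k → Finset (Fin n)) (hS : IsGenericZP S)
    (hord : patternOrder S ≤ ℓ) : Attains G S := by
  classical
  set W : Fin k → Submodule F (Module.Dual F (Fin k → F)) :=
    fun i => (colSpan G (S i)).dualAnnihilator with hW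
  have hdimV : finrank F (Fin k → F) = k := by simp
  have hall : ∀ I : Finset (Fin k),
      I.card ≤ finrank F (I.sup W : Submodule F (Module.Dual F (Fin k → F))) := by
    intro I
    rcases I.eq_empty_or_nonempty with rfl | hI
    · simp
    · have hb := isMDS_inf_bound G hl hGen h S hS hord I hI
      have hsup : I.sup W = (I.inf (fun i => colSpan G (S i))).dualAnnihilator :=
        sup_dualAnnihilator I _
      have hann := finrank_ann (I.inf (fun i => colSpan G (S i)))
      rw [hsup]
      omega
  obtain ⟨φ, hφmem, hφind⟩ := rado W hall
  set M : Matrix (Fin k) (Fin k) F :=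
    fun i m => φ i (fun q => if m = q then (1 : F) else 0) with hM
  have hMG : ∀ i j, (M * G) i j = φ i (fun q => G q j) := by
    intro i j
    rw [Matrix.mul_apply]
    have hcol : (fun q => G q j) = ∑ m, G m j • (fun q => if m = q then (1 : F) else 0) :=
      pi_eq_sum_univ _
    rw [hcol, map_sum]
    refine Finset.sum_congr rfl fun m _ => ?_
    rw [map_smul]
    simp only [hM, smul_eq_mul]
    ring
  have hdet : IsUnit M.det := by
    rw [← Matrix.isUnit_iff_isUnit_det, ← Matrix.linearIndependent_rows_iff_isUnit]
    set T := (Pi.basisFun F (Fin k)).dualBasis.equivFun with hT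
    have hrows : (fun i => M i) = fun i => T (φ i) := by
      funext i m
      rw [hT, Basis.equivFun_apply, Basis.dualBasis_repr]
      simp only [hM, Pi.basisFun_apply]
      congr 1
      funext q
      rw [Pi.single_apply]
      by_cases hqm : q = m
      · simp [hqm]
      · simp only [if_neg hqm, if_neg (fun (h : m = q) => hqm h.symm)]
    rw [show M.row = (fun i => M i) from rfl, hrows]
    exact hφind.map' T.toLinearMap T.ker
  refine ⟨M, hdet, fun i j hj => ?_⟩
  rw [hMG]
  exact (Submodule.mem_dualAnnihilator _).1 (hφmem i) _ (col_mem_colSpan G hj)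


lemma isGZP_isGreatest (hkn : k ≤ n) (hl : 1 ≤ ℓ)
    (hG : ∀ B : Finset (Fin n), B.card = k → colSpan G B = ⊤)
    (hAtt : ∀ S : Fin k → Finset (Fin n), IsGenericZP S → patternOrder S ≤ ℓ → Attains G S)
    (A : Fin ℓ → Finset (Fin n)) (hA : ∀ i, (A i).card ≤ k) :
    IsGreatest {v : ℤ | ∃ P : Finpartition (Finset.univ : Finset (Fin ℓ)), v = partVal k A P}
      ((Module.finrank F ↥(⨅ i, colSpan G (A i))) : ℤ) := by
  classical
  have hne : Nonempty (Fin ℓ) := Fin.pos_iff_nonempty.mp hl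
  -- the allocation
  set f : Finset (Fin ℓ) → ℤ := fun T => (k : ℤ) - (T.inf A).card with hf
  have hmono : ∀ {T T' : Finset (Fin ℓ)}, T.Nonempty → T ⊆ T' → f T ≤ f T' := by
    intro T T' hT hTT'
    have : T'.inf A ⊆ T.inf A := Finset.inf_mono hTT'
    have := Finset.card_le_card this
    simp only [hf]
    omega
  have hpos : ∀ i : Fin ℓ, 0 ≤ f {i} := by
    intro i
    simp only [hf, Finset.inf_singleton]
    have := hA i
    omega
  have hsubmod : ∀ {T T' : Finset (Fin ℓ)}, (T ∩ T').Nonempty →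
      f (T ∪ T') + f (T ∩ T') ≤ f T + f T' := by
    intro T T' hint
    have h1 : (T ∪ T').inf A = T.inf A ∩ T'.inf A := by
      rw [Finset.inf_union]; rfl
    have h2l : T.inf A ≤ (T ∩ T').inf A := Finset.inf_mono Finset.inter_subset_left
    have h2r : T'.inf A ≤ (T ∩ T').inf A := Finset.inf_mono Finset.inter_subset_right
    have h2 : T.inf A ∪ T'.inf A ⊆ (T ∩ T').inf A := Finset.union_subset h2l h2r
    have h3 := Finset.card_le_card h2
    have h4 := Finset.card_union_add_card_inter (T.inf A) (T'.inf A)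
    simp only [hf, h1]
    omega
  obtain ⟨m, hm0, hmfeas, P, hmsum⟩ := dw f hmono hpos hsubmod
  set N : Fin ℓ → ℕ := fun t => (m t).toNat with hN
  have hNm : ∀ t, (N t : ℤ) = m t := fun t => Int.toNat_of_nonneg (hm0 t)
  have hNk : ∑ t, N t ≤ k := by
    have h1 := hmfeas Finset.univ Finset.univ_nonempty
    simp only [hf] at h1
    have h2 : ((∑ t, N t : ℕ) : ℤ) = ∑ t, m t := by
      rw [Nat.cast_sum]
      exact Finset.sum_congr rfl fun t _ => hNm t
    have h4 : (0 : ℤ) ≤ ((Finset.univ.inf A).card : ℤ) := Int.ofNat_nonneg _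
    omega
  -- the blocks
  set c : Fin ℓ → ℕ := fun t => ∑ t' ∈ Finset.univ.filter (fun t' => t' < t), N t' with hc
  have hcN : ∀ t, c t + N t ≤ k := by
    intro t
    have hsub : insert t (Finset.univ.filter (fun t' => t' < t)) ⊆ Finset.univ :=
      Finset.subset_univ _
    have hnotmem : t ∉ Finset.univ.filter (fun t' => t' < t) := by simp
    have h1 : (∑ t' ∈ insert t (Finset.univ.filter (fun t' => t' < t)), N t') =
        N t + c t := by rw [Finset.sum_insert hnotmem]
    have h2 := Finset.sum_le_sum_of_subset (f := N) hsub
    omega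
  set R : Fin ℓ → Finset (Fin k) := fun t =>
    Finset.attachFin (Finset.Ico (c t) (c t + N t))
      (fun m hm => lt_of_lt_of_le (Finset.mem_Ico.1 hm).2 (hcN t)) with hR
  have hmemR : ∀ t (i : Fin k), i ∈ R t ↔ c t ≤ i.val ∧ i.val < c t + N t := by
    intro t i
    rw [hR]
    dsimp only
    rw [Finset.mem_attachFin, Finset.mem_Ico]
  have hcardR : ∀ t, (R t).card = N t := by
    intro t
    rw [hR]
    dsimp only
    rw [Finset.card_attachFin, Nat.card_Ico]
    omega
  have hclt : ∀ {t t' : Fin ℓ}, t < t' → c t + N t ≤ c t' := by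
    intro t t' htt'
    have hsub : insert t (Finset.univ.filter (fun s => s < t)) ⊆
        Finset.univ.filter (fun s => s < t') := by
      intro s hs
      rcases Finset.mem_insert.1 hs with rfl | hs
      · simp [htt']
      · simp only [Finset.mem_filter] at hs ⊢
        exact ⟨hs.1, lt_trans hs.2 htt'⟩
    have hnotmem : t ∉ Finset.univ.filter (fun s => s < t) := by simp
    have h1 := Finset.sum_le_sum_of_subset (f := N) hsub
    rw [Finset.sum_insert hnotmem] at h1
    simp only [hc]
    omega
  have hdisjR : ∀ {t t' : Fin ℓ}, t ≠ t' → Disjoint (R t) (R t') := by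
    have key : ∀ {t t' : Fin ℓ}, t < t' → Disjoint (R t) (R t') := by
      intro t t' htt'
      rw [Finset.disjoint_left]
      intro i hi hi'
      rw [hmemR] at hi hi'
      have := hclt htt'
      omega
    intro t t' htt'
    rcases lt_or_gt_of_ne htt' with h | h
    · exact key h
    · exact (key h).symm
  -- the pattern
  set τ : Fin k → Fin ℓ := fun i =>
    if h : ∃ t, i ∈ R t then h.choose else Classical.arbitrary (Fin ℓ) with hτ
  set S : Fin k → Finset (Fin n) := fun i =>
    if (∃ t, i ∈ R t) then A (τ i) else ∅ with hS
  have hτR : ∀ (i : Fin k) (t : Fin ℓ), i ∈ R t → τ i = t := by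
    intro i t hit
    have hex : ∃ t, i ∈ R t := ⟨t, hit⟩
    rw [hτ]
    dsimp only
    rw [dif_pos hex]
    by_contra hne'
    exact Finset.disjoint_left.1 (hdisjR hne') hex.choose_spec hit
  have hSR : ∀ (t : Fin ℓ) (i : Fin k), i ∈ R t → S i = A t := by
    intro t i hit
    rw [hS]
    dsimp only
    rw [if_pos ⟨t, hit⟩, hτR i t hit]
  have hSempty : ∀ i : Fin k, (¬ ∃ t, i ∈ R t) → S i = ∅ := by
    intro i h
    rw [hS]
    dsimp only
    rw [if_neg h]
  -- genericity
  have hgen : IsGenericZP S := by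
    intro I hI
    have hIk : I.card ≤ k := by
      have := Finset.card_le_card (Finset.subset_univ I)
      simpa using this
    by_cases htyped : ∀ i ∈ I, ∃ t, i ∈ R t
    · set T : Finset (Fin ℓ) := I.image τ with hT
      have hTinf : I.inf S = T.inf A := by
        have h1 : T.inf A = I.inf (A ∘ τ) := by rw [hT, Finset.inf_image]
        rw [h1]
        refine Finset.inf_congr rfl fun i hi => ?_
        obtain ⟨t, hit⟩ := htyped i hi
        rw [hSR t i hit]
        simp only [Function.comp_apply, hτR i t hit]
      have hTne : T.Nonempty := hI.image τ
      have hIcover : I ⊆ T.biUnion R := by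
        intro i hi
        obtain ⟨t, hit⟩ := htyped i hi
        refine Finset.mem_biUnion.2 ⟨τ i, Finset.mem_image_of_mem τ hi, ?_⟩
        rw [hτR i t hit]
        exact hit
      have hIcard : I.card ≤ ∑ t ∈ T, N t := by
        refine le_trans (Finset.card_le_card hIcover) ?_
        refine le_trans Finset.card_biUnion_le ?_
        exact le_of_eq (Finset.sum_congr rfl fun t _ => hcardR t)
      have hfeas := hmfeas T hTne
      have hcast : (∑ t ∈ T, (N t : ℤ)) = ∑ t ∈ T, m t :=
        Finset.sum_congr rfl fun t _ => hNm t
      simp only [hf] at hfeas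
      rw [hTinf]
      have h5 : ((T.inf A).card : ℤ) + I.card ≤ k := by
        have h6 : ((I.card : ℕ) : ℤ) ≤ ∑ t ∈ T, (N t : ℤ) := by
          rw [← Nat.cast_sum]
          exact_mod_cast hIcard
        omega
      omega
    · push_neg at htyped
      obtain ⟨i, hiI, hi⟩ := htyped
      have h1 : I.inf S ⊆ S i := Finset.inf_le hiI
      rw [hSempty i (not_exists.2 hi)] at h1
      have h2 : I.inf S = ∅ := Finset.subset_empty.1 h1
      rw [h2]
      simp
  -- order
  have horder : patternOrder S ≤ ℓ := by
    rw [patternOrder]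
    have hsub : (Finset.univ.image S).erase ∅ ⊆ Finset.univ.image A := by
      intro v hv
      obtain ⟨hvne, hv⟩ := Finset.mem_erase.1 hv
      obtain ⟨i, -, rfl⟩ := Finset.mem_image.1 hv
      by_cases h : ∃ t, i ∈ R t
      · obtain ⟨t, hit⟩ := h
        rw [hSR t i hit]
        exact Finset.mem_image_of_mem A (Finset.mem_univ t)
      · exact absurd (hSempty i h) hvne
    refine le_trans (Finset.card_le_card hsub) ?_
    refine le_trans Finset.card_image_le ?_
    simp
  -- attain and bound the dimension
  obtain ⟨M, hMdet, hM0⟩ := hAtt S hgen horder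
  set ψ : Fin k → Module.Dual F (Fin k → F) :=
    fun i => (LinearMap.proj i).comp M.mulVecLin with hψ
  have hψapply : ∀ i v, ψ i v = ∑ q, M i q * v q := by
    intro i v
    rw [hψ]
    simp [Matrix.mulVecLin, Matrix.mulVec, dotProduct]
  have hψcol : ∀ (i : Fin k) (j : Fin n), ψ i (fun q => G q j) = (M * G) i j := by
    intro i j
    rw [hψapply, Matrix.mul_apply]
  have hker : ∀ (t : Fin ℓ) (i : Fin k), i ∈ R t → colSpan G (A t) ≤ LinearMap.ker (ψ i) := by
    intro t i hit
    rw [colSpan, Submodule.span_le]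
    rintro x ⟨j, hj, rfl⟩
    rw [SetLike.mem_coe, LinearMap.mem_ker, hψcol]
    refine hM0 i j ?_
    rw [hSR t i hit]
    exact hj
  set bigR : Finset (Fin k) := Finset.univ.biUnion R with hbigR
  have hbigRcard : bigR.card = ∑ t, N t := by
    rw [hbigR, Finset.card_biUnion (fun t _ t' _ htt' => hdisjR htt')]
    exact Finset.sum_congr rfl fun t _ => hcardR t
  have hsubinf : (⨅ t, colSpan G (A t)) ≤ bigR.inf (fun i => LinearMap.ker (ψ i)) := by
    refine Finset.le_inf fun i hi => ?_
    obtain ⟨t, -, hit⟩ := Finset.mem_biUnion.1 hi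
    exact le_trans (iInf_le _ t) (hker t i hit)
  -- independence of the functionals
  have hrows : LinearIndependent F (fun i => M i) :=
    Matrix.linearIndependent_rows_iff_isUnit.2 ((Matrix.isUnit_iff_isUnit_det M).2 hMdet)
  have hψind : LinearIndependent F ψ := by
    set T' := (Pi.basisFun F (Fin k)).dualBasis.equivFun with hT'
    have heq : (fun i => M i) = fun i => T' (ψ i) := by
      funext i q
      rw [hT', Basis.equivFun_apply, Basis.dualBasis_repr, hψapply]
      simp [Pi.single_apply]
    rw [heq] at hrows
    have h2 := hrows.map' T'.symm.toLinearMap T'.symm.ker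
    have h3 : (⇑(T'.symm.toLinearMap) ∘ fun i => T' (ψ i)) = ψ := by
      funext i
      simp
    rwa [h3] at h2
  -- dimension bound
  have hinfker : bigR.inf (fun i => LinearMap.ker (ψ i)) =
      (Submodule.span F (ψ '' bigR)).dualCoannihilator := by
    ext v
    rw [Submodule.mem_finsetInf, Submodule.mem_dualCoannihilator]
    constructor
    · intro h φ hφ
      refine Submodule.span_induction ?_ ?_ ?_ ?_ hφ
      · rintro x ⟨i, hi, rfl⟩
        exact LinearMap.mem_ker.1 (h i hi)
      · simp
      · intro a b _ _ ha hb
        simp [LinearMap.add_apply, ha, hb]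
      · intro r a _ ha
        simp [LinearMap.smul_apply, ha]
    · intro h i hi
      exact LinearMap.mem_ker.2 (h (ψ i) (Submodule.subset_span ⟨i, hi, rfl⟩))
  have hspanrank : finrank F (Submodule.span F (ψ '' bigR)) = bigR.card := by
    have himg : (ψ '' (bigR : Set (Fin k))) =
        Set.range (fun i : {x // x ∈ bigR} => ψ i.val) := by
      ext x
      constructor
      · rintro ⟨i, hi, rfl⟩
        exact ⟨⟨i, Finset.mem_coe.1 hi⟩, rfl⟩
      · rintro ⟨⟨i, hi⟩, rfl⟩
        exact ⟨i, Finset.mem_coe.2 hi, rfl⟩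
    have hind2 : LinearIndependent F (fun i : {x // x ∈ bigR} => ψ i.val) :=
      hψind.comp Subtype.val Subtype.val_injective
    rw [himg, finrank_span_eq_card hind2, Fintype.card_coe]
  have hdualrank := Subspace.finrank_add_finrank_dualCoannihilator_eq
    (Submodule.span F (ψ '' bigR))
  have hdimV : finrank F (Fin k → F) = k := by simp
  have hupper : finrank F ↥(⨅ t, colSpan G (A t)) + ∑ t, N t ≤ k := by
    have h1 : finrank F ↥(⨅ t, colSpan G (A t)) ≤
        finrank F (bigR.inf (fun i => LinearMap.ker (ψ i)) : Submodule F (Fin k → F)) :=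
      Submodule.finrank_mono hsubinf
    rw [hinfker] at h1
    omega
  -- convert to partVal
  have hfval : (k : ℤ) - ∑ t, m t = partVal k A P := by
    rw [hmsum, partVal]
    have h1 : ∑ p ∈ P.parts, f p =
        (P.parts.card : ℤ) * k - ∑ p ∈ P.parts, ((p.inf A).card : ℤ) := by
      simp only [hf]
      rw [Finset.sum_sub_distrib, Finset.sum_const, nsmul_eq_mul]
    rw [h1]
    ring
  have hNsum : ((∑ t, N t : ℕ) : ℤ) = ∑ t, m t := by
    push_cast
    exact Finset.sum_congr rfl fun t _ => hNm t
  have hub : (finrank F ↥(⨅ t, colSpan G (A t)) : ℤ) ≤ partVal k A P := by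
    rw [← hfval]
    omega
  have hlb := partVal_le_finrank G hG hkn hl A hA P
  constructor
  · exact ⟨P, le_antisymm hub hlb⟩
  · rintro v ⟨P', rfl⟩
    exact partVal_le_finrank G hG hkn hl A hA P'
end Glue

end MdsGzpAux

/-- A code `C` is `MDS(ℓ)` iff it is `GZP(ℓ)`. -/
theorem mds_iff_gzp {F : Type*} [Field F] (n k ℓ : ℕ)
    (hk : 1 ≤ k) (hkn : k ≤ n) (hℓ : 1 ≤ ℓ)
    (C : Submodule F (Fin n → F)) (hC : Module.finrank F C = k) :
    IsMDS n k ℓ C ↔ IsGZP n k ℓ C := by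
  constructor
  · intro h G hGen
    exact ⟨MdsGzpAux.isMDS_spanning G hℓ hGen h,
      fun S hS hord => MdsGzpAux.isMDS_attains G hℓ hGen h S hS hord⟩
  · intro h G hGen A hA
    obtain ⟨hG, hAtt⟩ := h G hGen
    exact MdsGzpAux.isGZP_isGreatest G hkn hℓ hG hAtt A hA

end
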